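/- Under the strict mutual coherence condition |X_i^T X_j| < n/(2|Ŝ|) for all distinct i, j ∈ Ŝ (columns normalized to squared norm n), every coordinate of (X_Ŝ^T X_Ŝ)^{-1} sign(β̂_Ŝ) has the same sign as the corresponding coordinate of sign(β̂_Ŝ); in particular the sign-disagreement criterion F(Ŝ) = (1/|Ŝ|)|{j ∈ Ŝ : sign(β̂_j) ≠ sign(((X_Ŝ^T X_Ŝ)^{-1} sign(β̂_Ŝ))_j)}| equals 0. -/

import Mathlib

open scoped BigOperators

/-- Under the strict mutual coherence condition `|Xᵢᵀ Xⱼ| < n/(2|Ŝ|)` on the support `Ŝ`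
of `β̂` (columns normalized to squared norm `n`), the Gram matrix on `Ŝ` is invertible,
every coordinate of `(X_Ŝᵀ X_Ŝ)⁻¹ sign(β̂_Ŝ)` has the same sign as the corresponding
coordinate of `sign(β̂_Ŝ)`, and the sign-disagreement criterion `F(Ŝ)` equals `0`. -/
theorem strict_coherence_criterion_zero (n p : ℕ) (hn : 0 < n)
    (X : Matrix (Fin n) (Fin p) ℝ) (βhat : Fin p → ℝ)
    (S : Finset (Fin p)) (hS : ∀ j, j ∈ S ↔ βhat j ≠ 0) (hSne : S.Nonempty)
    (hnorm : ∀ j ∈ S, ∑ i, X i j * X i j = (n : ℝ))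
    (hcoh : ∀ i ∈ S, ∀ j ∈ S, i ≠ j →
      |∑ k, X k i * X k j| < (n : ℝ) / (2 * S.card)) :
    let G : Matrix S S ℝ := fun i j => ∑ k, X k i * X k j
    let σ : S → ℝ := fun k => Real.sign (βhat k)
    IsUnit G ∧
    (∀ l : S, Real.sign (G⁻¹.mulVec σ l) = Real.sign (βhat l)) ∧
    (1 / (S.card : ℝ)) *
        (Finset.univ.filter
          (fun l : S => Real.sign (βhat l) ≠ Real.sign (G⁻¹.mulVec σ l))).card = 0 := by
  intro G σ
  have ha : 0 < S.card := hSne.card_pos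
  have hnR : (0:ℝ) < n := by exact_mod_cast hn
  have haR : (0:ℝ) < S.card := by exact_mod_cast ha
  have hA1' : (1:ℝ) ≤ (S.card:ℝ) := by exact_mod_cast ha
  set A : ℝ := (S.card : ℝ) with hA
  -- basics
  have hdiag : ∀ l : S, G l l = (n : ℝ) := fun l => hnorm l l.2
  have hoff : ∀ l k : S, l ≠ k → |G l k| < (n:ℝ)/(2*A) := by
    intro l k hlk
    exact hcoh l l.2 k k.2 (fun h => hlk (Subtype.ext h))
  have hcardS : (Fintype.card S : ℕ) = S.card := Fintype.card_coe S
  have hcut : (0:ℝ) < (n:ℝ)/(2*A) := by positivity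
  -- row sums of off-diagonal entries
  have hrow : ∀ l : S, ∑ k ∈ Finset.univ.erase l, |G l k| ≤ (A - 1) * ((n:ℝ)/(2*A)) := by
    intro l
    have h1 : ∑ k ∈ Finset.univ.erase l, |G l k|
        ≤ ∑ _k ∈ Finset.univ.erase l, (n:ℝ)/(2*A) := by
      refine Finset.sum_le_sum fun k hk => (hoff l k ?_).le
      exact fun h => (Finset.mem_erase.mp hk).1 h.symm
    have h2 : ((Finset.univ.erase l).card : ℝ) = A - 1 := by
      rw [Finset.card_erase_of_mem (Finset.mem_univ l), Finset.card_univ, hcardS]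
      have h1le : 1 ≤ S.card := ha
      rw [Nat.cast_sub h1le, Nat.cast_one, hA]
    calc ∑ k ∈ Finset.univ.erase l, |G l k| ≤ _ := h1
      _ = ((Finset.univ.erase l).card : ℝ) * ((n:ℝ)/(2*A)) := by
          rw [Finset.sum_const, nsmul_eq_mul]
      _ = (A - 1) * ((n:ℝ)/(2*A)) := by rw [h2]
  have hAm1 : (A - 1) * ((n:ℝ)/(2*A)) < (n:ℝ) := by
    have h1 : A - 1 < 2 * A := by nlinarith
    calc (A - 1) * ((n:ℝ)/(2*A)) < (2*A) * ((n:ℝ)/(2*A)) := by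
          apply mul_lt_mul_of_pos_right h1 hcut
      _ = (n:ℝ) := by field_simp
  -- determinant nonzero
  have hdet : G.det ≠ 0 := by
    apply det_ne_zero_of_sum_row_lt_diag
    intro l
    have := hrow l
    simp only [Real.norm_eq_abs]
    calc ∑ k ∈ Finset.univ.erase l, |G l k| ≤ (A-1) * ((n:ℝ)/(2*A)) := hrow l
      _ < (n:ℝ) := hAm1
      _ = |G l l| := by rw [hdiag l, abs_of_pos hnR]
  have hunit : IsUnit G := (Matrix.isUnit_iff_isUnit_det G).mpr (isUnit_iff_ne_zero.mpr hdet)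
  -- the solution vector
  set v : S → ℝ := G⁻¹.mulVec σ with hv
  have hGv : G.mulVec v = σ := by
    rw [hv, Matrix.mulVec_mulVec, Matrix.mul_nonsing_inv _ (isUnit_iff_ne_zero.mpr hdet), Matrix.one_mulVec]
  have hσabs : ∀ l : S, |σ l| = 1 := by
    intro l
    have hne : βhat l ≠ 0 := (hS l).mp l.2
    rcases hne.lt_or_gt with h | h
    · simp [σ, Real.sign_of_neg h]
    · simp [σ, Real.sign_of_pos h]
  -- row expansion: σ l = n * v l + R l
  have hexp : ∀ l : S, σ l = (n:ℝ) * v l + ∑ k ∈ Finset.univ.erase l, G l k * v k := by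
    intro l
    have : σ l = ∑ k, G l k * v k := by
      rw [← hGv]; rfl
    rw [this, ← Finset.add_sum_erase _ _ (Finset.mem_univ l), hdiag l]
  -- max coordinate
  obtain ⟨m, -, hm⟩ := Finset.exists_max_image (Finset.univ : Finset S) (fun k => |v k|)
    (Finset.univ_nonempty_iff.mpr (hSne.to_subtype))
  have hm' : ∀ k : S, |v k| ≤ |v m| := fun k => hm k (Finset.mem_univ k)
  have hRbound : ∀ l : S, |∑ k ∈ Finset.univ.erase l, G l k * v k|
      ≤ (A - 1) * ((n:ℝ)/(2*A)) * |v m| := by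
    intro l
    calc |∑ k ∈ Finset.univ.erase l, G l k * v k|
        ≤ ∑ k ∈ Finset.univ.erase l, |G l k * v k| := Finset.abs_sum_le_sum_abs _ _
      _ ≤ ∑ k ∈ Finset.univ.erase l, |G l k| * |v m| := by
          refine Finset.sum_le_sum fun k _ => ?_
          rw [abs_mul]
          exact mul_le_mul_of_nonneg_left (hm' k) (abs_nonneg _)
      _ = (∑ k ∈ Finset.univ.erase l, |G l k|) * |v m| := by rw [Finset.sum_mul]
      _ ≤ (A - 1) * ((n:ℝ)/(2*A)) * |v m| :=
          mul_le_mul_of_nonneg_right (hrow l) (abs_nonneg _)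
  -- bound on |v m|
  have hBm : |v m| ≤ 2 / n := by
    have h1 := hexp m
    have h2 := hRbound m
    have h3 : (n:ℝ) * |v m| ≤ |σ m| + |∑ k ∈ Finset.univ.erase m, G m k * v k| := by
      have : (n:ℝ) * v m = σ m - ∑ k ∈ Finset.univ.erase m, G m k * v k := by
        linarith [h1]
      calc (n:ℝ) * |v m| = |(n:ℝ) * v m| := by rw [abs_mul, abs_of_pos hnR]
        _ = |σ m - ∑ k ∈ Finset.univ.erase m, G m k * v k| := by rw [this]
        _ ≤ _ := abs_sub _ _
    have h4 : (A - 1) * ((n:ℝ)/(2*A)) ≤ (n:ℝ)/2 := by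
      have hA0 : A ≠ 0 := haR.ne'
      have e : (A - 1) * ((n:ℝ)/(2*A)) = ((A-1)/A) * ((n:ℝ)/2) := by
        field_simp
      rw [e]
      have h5 : (A-1)/A ≤ 1 := by rw [div_le_one haR]; linarith
      exact mul_le_of_le_one_left (by positivity) h5
    have h5 : (n:ℝ) * |v m| ≤ 1 + (n:ℝ)/2 * |v m| := by
      have := hσabs m
      nlinarith [mul_le_mul_of_nonneg_right h4 (abs_nonneg (v m))]
    rw [le_div_iff₀ hnR]
    nlinarith
  -- strict sign agreement
  have hsign : ∀ l : S, 0 < σ l * v l := by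
    intro l
    have hR := hRbound l
    have hstrict : (A - 1) * ((n:ℝ)/(2*A)) * |v m| < 1 := by
      have h1 : (A - 1) * ((n:ℝ)/(2*A)) * |v m| ≤ (A - 1) * ((n:ℝ)/(2*A)) * (2/n) :=
        mul_le_mul_of_nonneg_left hBm
          (mul_nonneg (by rw [hA] at *; linarith [hA1']) hcut.le)
      have hA0 : A ≠ 0 := haR.ne'
      have hn0 : (n:ℝ) ≠ 0 := hnR.ne'
      have h2 : (A - 1) * ((n:ℝ)/(2*A)) * (2/n) = (A - 1)/A := by
        field_simp
        try tauto
      have h3 : (A - 1)/A < 1 := by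
        rw [div_lt_one haR]; linarith
      linarith
    have hRlt : |∑ k ∈ Finset.univ.erase l, G l k * v k| < 1 := lt_of_le_of_lt hR hstrict
    have hexp' := hexp l
    have hσsq : σ l * σ l = 1 := by
      have := hσabs l
      nlinarith [abs_nonneg (σ l), sq_abs (σ l)]
    have key : σ l * ((n:ℝ) * v l) = 1 - σ l * ∑ k ∈ Finset.univ.erase l, G l k * v k := by
      have hnv : (n:ℝ) * v l = σ l - ∑ k ∈ Finset.univ.erase l, G l k * v k := by linarith
      rw [hnv, mul_sub, hσsq]
    have habs : |σ l * ∑ k ∈ Finset.univ.erase l, G l k * v k| < 1 := by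
      rw [abs_mul, hσabs l, one_mul]; exact hRlt
    have h0 : 0 < σ l * ((n:ℝ) * v l) := by
      rw [key]
      have := abs_lt.mp habs
      linarith [this.2]
    have hmul : σ l * ((n:ℝ) * v l) = (n:ℝ) * (σ l * v l) := by ring
    rw [hmul] at h0
    exact (mul_pos_iff_of_pos_left hnR).mp h0
  have hsigneq : ∀ l : S, Real.sign (v l) = Real.sign (βhat l) := by
    intro l
    have hne : βhat l ≠ 0 := (hS l).mp l.2
    rcases hne.lt_or_gt with h | h
    · have hσ : σ l = -1 := Real.sign_of_neg h
      have : 0 < (-1 : ℝ) * v l := by rw [← hσ]; exact hsign l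
      have hvneg : v l < 0 := by linarith
      rw [Real.sign_of_neg hvneg, Real.sign_of_neg h]
    · have hσ : σ l = 1 := Real.sign_of_pos h
      have : 0 < (1 : ℝ) * v l := by rw [← hσ]; exact hsign l
      have hvpos : 0 < v l := by linarith
      rw [Real.sign_of_pos hvpos, Real.sign_of_pos h]
  refine ⟨hunit, hsigneq, ?_⟩
  have hempty : (Finset.univ.filter
      (fun l : S => Real.sign (βhat l) ≠ Real.sign (G⁻¹.mulVec σ l))) = ∅ := by
    apply Finset.filter_false_of_mem
    intro l _
    simp only [ne_eq, not_not]
    exact (hsigneq l).symm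
  rw [hempty]
  simp
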